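/- Let X be an infinite chain with X^0 = ∅, and let α = α₁α₂⋯αₙ be a composition of order-preserving maps of X such that α(x⁺) = x⁻ for some x⁺ ∈ X^+ and x⁻ ∈ X^-. Then there exists i ∈ {1,…,n} with |Im(α)| ≤ |Im(αᵢ)| < |X|. -/

import Mathlib

open Set Cardinal

section Aux

variable {X : Type*} [LinearOrder X] [Infinite X]

lemma aux_cross (hX0 : ∀ x : X, ¬ (Cardinal.mk ↥(Set.Iic x) = Cardinal.mk X ∧
      Cardinal.mk ↥(Set.Ici x) = Cardinal.mk X)) :
    ∀ (l : List (X → X)) (x : X), Cardinal.mk ↥(Set.Ici x) < Cardinal.mk X →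
      Cardinal.mk ↥(Set.Iic (l.foldr (· ∘ ·) id x)) < Cardinal.mk X →
      ∃ f ∈ l, ∃ z : X, Cardinal.mk ↥(Set.Ici z) < Cardinal.mk X ∧
        Cardinal.mk ↥(Set.Iic (f z)) < Cardinal.mk X := by
  have hdisj : ∀ x : X, ¬ (Cardinal.mk ↥(Set.Ici x) < Cardinal.mk X ∧
      Cardinal.mk ↥(Set.Iic x) < Cardinal.mk X) := by
    intro x ⟨h1, h2⟩
    have hun : (Set.Iic x ∪ Set.Ici x : Set X) = Set.univ := by
      ext y; simp [le_total y x]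
    have : Cardinal.mk X ≤ Cardinal.mk ↥(Set.Iic x) + Cardinal.mk ↥(Set.Ici x) := by
      calc Cardinal.mk X = Cardinal.mk ↥(Set.Iic x ∪ Set.Ici x : Set X) := by
            rw [hun, Cardinal.mk_univ]
        _ ≤ _ := Cardinal.mk_union_le _ _
    have hlt : Cardinal.mk ↥(Set.Iic x) + Cardinal.mk ↥(Set.Ici x) < Cardinal.mk X :=
      Cardinal.add_lt_of_lt (Cardinal.infinite_iff.mp ‹Infinite X›) h2 h1
    exact absurd (lt_of_le_of_lt this hlt) (lt_irrefl _)
  intro l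
  induction l with
  | nil =>
    intro x hP hM
    exact absurd ⟨hP, hM⟩ (hdisj x)
  | cons g t ih =>
    intro x hP hM
    have hy : ∀ y : X, Cardinal.mk ↥(Set.Ici y) < Cardinal.mk X ∨
        Cardinal.mk ↥(Set.Iic y) < Cardinal.mk X := by
      intro y
      by_contra hc
      push_neg at hc
      exact hX0 y ⟨le_antisymm (Cardinal.mk_le_mk_of_subset (Set.subset_univ _) |>.trans
          (by rw [Cardinal.mk_univ])) hc.2,
        le_antisymm (Cardinal.mk_le_mk_of_subset (Set.subset_univ _) |>.trans
          (by rw [Cardinal.mk_univ])) hc.1⟩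
    set y := t.foldr (· ∘ ·) id x with hy'
    rcases hy y with hPy | hMy
    · exact ⟨g, List.mem_cons_self, y, hPy, hM⟩
    · obtain ⟨f, hf, z, hz⟩ := ih x hP hMy
      exact ⟨f, List.mem_cons_of_mem g hf, z, hz⟩

lemma aux_range_le : ∀ (l : List (X → X)) (f : X → X), f ∈ l →
    Cardinal.mk ↥(Set.range (l.foldr (· ∘ ·) id)) ≤ Cardinal.mk ↥(Set.range f) := by
  intro l
  induction l with
  | nil => intro f hf; simp at hf
  | cons g t ih =>
    intro f hf
    have hcomp : (g :: t).foldr (· ∘ ·) id = g ∘ t.foldr (· ∘ ·) id := rfl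
    rcases List.mem_cons.mp hf with rfl | hf'
    · rw [hcomp]
      exact Cardinal.mk_le_mk_of_subset (Set.range_comp_subset_range _ _)
    · calc Cardinal.mk ↥(Set.range ((g :: t).foldr (· ∘ ·) id))
          = Cardinal.mk ↥(g '' Set.range (t.foldr (· ∘ ·) id)) := by
            rw [hcomp, Set.range_comp]
        _ ≤ Cardinal.mk ↥(Set.range (t.foldr (· ∘ ·) id)) := Cardinal.mk_image_le
        _ ≤ _ := ih f hf'

end Aux

theorem stmt_4 {X : Type*} [LinearOrder X] [Infinite X]
    (hX0 : ∀ x : X, ¬ (Cardinal.mk ↥(Set.Iic x) = Cardinal.mk X ∧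
      Cardinal.mk ↥(Set.Ici x) = Cardinal.mk X))
    (l : List (X → X)) (hl : l ≠ []) (hmono : ∀ f ∈ l, Monotone f)
    (α : X → X) (hα : α = l.foldr (· ∘ ·) id)
    (xp xm : X) (hxp : Cardinal.mk ↥(Set.Ici xp) < Cardinal.mk X)
    (hxm : Cardinal.mk ↥(Set.Iic xm) < Cardinal.mk X) (h : α xp = xm) :
    ∃ f ∈ l, Cardinal.mk ↥(Set.range α) ≤ Cardinal.mk ↥(Set.range f) ∧
      Cardinal.mk ↥(Set.range f) < Cardinal.mk X := by
  subst hα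
  obtain ⟨f, hf, z, hPz, hMfz⟩ := aux_cross hX0 l xp hxp (by rw [h]; exact hxm)
  refine ⟨f, hf, aux_range_le l f hf, ?_⟩
  have hmf := hmono f hf
  have hsub : Set.range f ⊆ Set.Iic (f z) ∪ f '' Set.Ici z := by
    rintro _ ⟨y, rfl⟩
    rcases le_total y z with hy | hy
    · exact Or.inl (hmf hy)
    · exact Or.inr ⟨y, hy, rfl⟩
  calc Cardinal.mk ↥(Set.range f) ≤ Cardinal.mk ↥(Set.Iic (f z) ∪ f '' Set.Ici z : Set X) :=
        Cardinal.mk_le_mk_of_subset hsub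
    _ ≤ Cardinal.mk ↥(Set.Iic (f z)) + Cardinal.mk ↥(f '' Set.Ici z) :=
        Cardinal.mk_union_le _ _
    _ < Cardinal.mk X := Cardinal.add_lt_of_lt (Cardinal.infinite_iff.mp ‹Infinite X›)
        hMfz (lt_of_le_of_lt Cardinal.mk_image_le hPz)
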